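/- Let N ≥ 2 and let a_1, …, a_N be vectors in a complex inner product space E with norm ‖·‖ induced by the inner product. Then ∑_{i=1}^N ‖a_i‖² ≥ (1/(2N − 2)) · [ (2/(N(N − 1))) · (∑_{1 ≤ i < j ≤ N} ‖a_i − a_j‖)² + ∑_{1 ≤ i < j ≤ N} ‖a_i + a_j‖² ]. -/

import Mathlib

open Finset in
private lemma sum_ne_eq {N : ℕ} (i : Fin N) (x : Fin N → ℝ) :
    (∑ j, if i ≠ j then x j else 0) = (∑ j, x j) - x i := by
  have h : ∀ j : Fin N, (if i ≠ j then x j else 0) = x j - (if j = i then x j else 0) := by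
    intro j
    by_cases h : j = i
    · subst h; simp
    · simp [Ne.symm h, h]
  rw [Finset.sum_congr rfl (fun j _ => h j), Finset.sum_sub_distrib,
    Finset.sum_ite_eq' univ i x]
  simp

open Finset in
private lemma double_pair_sum {N : ℕ} (c : Fin N → Fin N → ℝ) (hsym : ∀ i j, c i j = c j i) :
    2 * ∑ p ∈ univ.filter (fun p : Fin N × Fin N => p.1 < p.2), c p.1 p.2
      = ∑ i, ∑ j, if i ≠ j then c i j else 0 := by
  rw [Finset.sum_filter, Fintype.sum_prod_type, two_mul]
  have h2 : ∑ i, ∑ j, (if i < j then c i j else 0)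
      = ∑ i, ∑ j, (if j < i then c i j else 0) := by
    rw [Finset.sum_comm]
    refine Finset.sum_congr rfl fun i _ => Finset.sum_congr rfl fun j _ => ?_
    by_cases h : j < i
    · rw [if_pos h, if_pos h, hsym j i]
    · rw [if_neg h, if_neg h]
  nth_rewrite 2 [h2]
  rw [← Finset.sum_add_distrib]
  refine Finset.sum_congr rfl fun i _ => ?_
  rw [← Finset.sum_add_distrib]
  refine Finset.sum_congr rfl fun j _ => ?_
  rcases lt_trichotomy i j with h | h | h
  · rw [if_pos h, if_neg (lt_asymm h), if_pos h.ne, add_zero]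
  · subst h; simp
  · rw [if_neg (lt_asymm h), if_pos h, if_pos h.ne', zero_add]

open Finset in
theorem sum_sq_norm_ge_minus {E : Type*} [NormedAddCommGroup E] [InnerProductSpace ℂ E]
    (N : ℕ) (hN : 2 ≤ N) (a : Fin N → E) :
    ∑ i, ‖a i‖ ^ 2 ≥
      (1 / (2 * (N : ℝ) - 2)) *
        ((2 / ((N : ℝ) * ((N : ℝ) - 1))) *
            (∑ p ∈ univ.filter (fun p : Fin N × Fin N => p.1 < p.2), ‖a p.1 - a p.2‖) ^ 2 +
          ∑ p ∈ univ.filter (fun p : Fin N × Fin N => p.1 < p.2), ‖a p.1 + a p.2‖ ^ 2) := by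
  set S := univ.filter (fun p : Fin N × Fin N => p.1 < p.2) with hS
  have hNR : (2 : ℝ) ≤ (N : ℝ) := by exact_mod_cast hN
  set T : ℝ := ∑ i, ‖a i‖ ^ 2 with hT
  -- cardinality of S
  have hcard : 2 * (S.card : ℝ) = (N : ℝ) * ((N : ℝ) - 1) := by
    have hd := double_pair_sum (N := N) (fun _ _ => (1 : ℝ)) (fun _ _ => rfl)
    have hc : ((S.card : ℝ)) = ∑ _p ∈ S, (1 : ℝ) := by simp
    rw [hc, hS, hd]
    have : ∀ i : Fin N, (∑ j : Fin N, if i ≠ j then (1 : ℝ) else 0) = (N : ℝ) - 1 := by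
      intro i
      rw [sum_ne_eq i (fun _ => (1 : ℝ))]
      simp
    rw [Finset.sum_congr rfl (fun i _ => this i)]
    simp
    ring
  -- parallelogram identity summed
  have hpar : (∑ p ∈ S, ‖a p.1 - a p.2‖ ^ 2) + ∑ p ∈ S, ‖a p.1 + a p.2‖ ^ 2
      = (2 * (N : ℝ) - 2) * T := by
    have hstep : ∀ p : Fin N × Fin N,
        ‖a p.1 - a p.2‖ ^ 2 + ‖a p.1 + a p.2‖ ^ 2
          = 2 * (‖a p.1‖ ^ 2 + ‖a p.2‖ ^ 2) := by
      intro p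
      have h := parallelogram_law_with_norm ℂ (a p.1) (a p.2)
      have e1 : ‖a p.1 - a p.2‖ ^ 2 = ‖a p.1 - a p.2‖ * ‖a p.1 - a p.2‖ := sq _
      have e2 : ‖a p.1 + a p.2‖ ^ 2 = ‖a p.1 + a p.2‖ * ‖a p.1 + a p.2‖ := sq _
      have e3 : ‖a p.1‖ ^ 2 = ‖a p.1‖ * ‖a p.1‖ := sq _
      have e4 : ‖a p.2‖ ^ 2 = ‖a p.2‖ * ‖a p.2‖ := sq _
      rw [e1, e2, e3, e4]
      linarith
    have hmul : 2 * ((∑ p ∈ S, ‖a p.1 - a p.2‖ ^ 2) + ∑ p ∈ S, ‖a p.1 + a p.2‖ ^ 2)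
        = 2 * ((2 * (N : ℝ) - 2) * T) := by
      rw [← Finset.sum_add_distrib,
        Finset.sum_congr rfl (fun p _ => hstep p), hS,
        double_pair_sum (fun i j => 2 * (‖a i‖ ^ 2 + ‖a j‖ ^ 2)) (fun i j => by ring)]
      have hinner : ∀ i : Fin N,
          (∑ j : Fin N, if i ≠ j then 2 * (‖a i‖ ^ 2 + ‖a j‖ ^ 2) else 0)
            = 2 * (N : ℝ) * ‖a i‖ ^ 2 + 2 * T - 4 * ‖a i‖ ^ 2 := by
        intro i
        rw [sum_ne_eq i (fun j => 2 * (‖a i‖ ^ 2 + ‖a j‖ ^ 2))]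
        have : ∑ j : Fin N, 2 * (‖a i‖ ^ 2 + ‖a j‖ ^ 2)
            = (N : ℝ) * (2 * ‖a i‖ ^ 2) + 2 * T := by
          simp [mul_add, Finset.sum_add_distrib, Finset.mul_sum, hT]
        rw [this]; ring
      rw [Finset.sum_congr rfl (fun i _ => hinner i)]
      have e : ∀ i : Fin N, 2 * (N : ℝ) * ‖a i‖ ^ 2 + 2 * T - 4 * ‖a i‖ ^ 2
          = (2 * (N : ℝ) - 4) * ‖a i‖ ^ 2 + 2 * T := fun i => by ring
      rw [Finset.sum_congr rfl (fun i _ => e i), Finset.sum_add_distrib, ← Finset.mul_sum,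
        ← hT, Finset.sum_const, Finset.card_univ, Fintype.card_fin, nsmul_eq_mul]
      ring
    linarith
  -- Cauchy-Schwarz
  have hcs : (∑ p ∈ S, ‖a p.1 - a p.2‖) ^ 2 ≤ S.card * ∑ p ∈ S, ‖a p.1 - a p.2‖ ^ 2 :=
    sq_sum_le_card_mul_sum_sq
  have hNN : (0 : ℝ) < (N : ℝ) * ((N : ℝ) - 1) := by nlinarith
  have hcs2 : (2 / ((N : ℝ) * ((N : ℝ) - 1))) * (∑ p ∈ S, ‖a p.1 - a p.2‖) ^ 2
      ≤ ∑ p ∈ S, ‖a p.1 - a p.2‖ ^ 2 := by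
    rw [div_mul_eq_mul_div, div_le_iff₀ hNN]
    calc 2 * (∑ p ∈ S, ‖a p.1 - a p.2‖) ^ 2
        ≤ 2 * ((S.card : ℝ) * ∑ p ∈ S, ‖a p.1 - a p.2‖ ^ 2) := by linarith
      _ = (2 * (S.card : ℝ)) * ∑ p ∈ S, ‖a p.1 - a p.2‖ ^ 2 := by ring
      _ = ((N : ℝ) * ((N : ℝ) - 1)) * ∑ p ∈ S, ‖a p.1 - a p.2‖ ^ 2 := by rw [hcard]
      _ = (∑ p ∈ S, ‖a p.1 - a p.2‖ ^ 2) * ((N : ℝ) * ((N : ℝ) - 1)) := by ring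
  have hpos : (0 : ℝ) < 2 * (N : ℝ) - 2 := by linarith
  rw [ge_iff_le, div_mul_eq_mul_div, one_mul, div_le_iff₀ hpos]
  linarith [hcs2, hpar]
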